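/- Let D be an integral domain with quotient field K. Then tilde(▲^{v_D}) = tilde(▲^{w_D}) = w_{D[X]}, where v_D is the v-operation of D, w_D := tilde(v_D), and w_{D[X]} is the w-operation of D[X]. -/

import Mathlib

/- Preliminaries: semistar operations on an integral domain `R` with quotient field `F`
(submodules of `F` over `R`), polynomial extension of semistar operations from `D`
to `D[X]` (viewed inside the quotient field `K(X) = RatFunc K` of `D[X]`). -/

open Polynomial Pointwise

set_option synthInstance.maxHeartbeats 1000000
set_option maxHeartbeats 1000000

open scoped Classical

noncomputable section

section Generic

variable (R F : Type*) [CommRing R] [Field F] [Algebra R F]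

/-- `o` is a semistar operation of `R` (on the nonzero `R`-submodules of the
quotient field `F`). -/
def IsSemistarOp (o : Submodule R F → Submodule R F) : Prop :=
  (∀ x : F, x ≠ 0 → ∀ E : Submodule R F, E ≠ ⊥ → o (x • E) = x • o E) ∧
  (∀ E G : Submodule R F, E ≠ ⊥ → G ≠ ⊥ → E ≤ G → o E ≤ o G) ∧
  (∀ E : Submodule R F, E ≠ ⊥ → E ≤ o E) ∧
  (∀ E : Submodule R F, E ≠ ⊥ → o (o E) = o E)

/-- The finite-type operation `⋆_f` associated to `⋆`:
`E^{⋆_f} = ⋃ { G^⋆ : G nonzero finitely generated, G ⊆ E }`. -/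
def finTypeFun (o : Submodule R F → Submodule R F) : Submodule R F → Submodule R F :=
  fun E => ⨆ (G : Submodule R F) (_ : G ≠ ⊥) (_ : G.FG) (_ : G ≤ E), o G

/-- `⋆` is of finite type, i.e. `⋆ = ⋆_f`. -/
def IsFiniteTypeFun (o : Submodule R F → Submodule R F) : Prop :=
  ∀ E : Submodule R F, E ≠ ⊥ → o E = finTypeFun R F o E

/-- `⋆` is stable: `(E ∩ G)^⋆ = E^⋆ ∩ G^⋆`. -/
def IsStableFun (o : Submodule R F → Submodule R F) : Prop :=
  ∀ E G : Submodule R F, E ≠ ⊥ → G ≠ ⊥ → o (E ⊓ G) = o E ⊓ o G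

/-- An ideal of `R` viewed as an `R`-submodule of `F`. -/
def idealSub (J : Ideal R) : Submodule R F := Submodule.map (Algebra.linearMap R F) J

/-- `(E : J) = { x ∈ F : xJ ⊆ E }` for an ideal `J` of `R`. -/
def colonIdeal (E : Submodule R F) (J : Ideal R) : Submodule R F where
  carrier := { x : F | ∀ a ∈ J, a • x ∈ E }
  add_mem' := fun {x y} hx hy a ha => by
    simpa [smul_add] using E.add_mem (hx a ha) (hy a ha)
  zero_mem' := fun a _ => by simpa using E.zero_mem
  smul_mem' := fun r x hx a ha => by
    rw [← mul_smul, mul_comm, mul_smul]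
    exact E.smul_mem r (hx a ha)

/-- The stable finite-type operation `tilde ⋆` associated to `⋆`:
`E^{tilde ⋆} = ⋃ { (E : J) : J nonzero finitely generated integral ideal with J^⋆ = R^⋆ }`. -/
def tildeFun (o : Submodule R F → Submodule R F) : Submodule R F → Submodule R F :=
  fun E => ⨆ (J : Ideal R) (_ : J ≠ ⊥) (_ : J.FG)
    (_ : o (idealSub R F J) = o (1 : Submodule R F)), colonIdeal R F E J

/-- The `v`-operation: `E^v = (R : (R : E))` for `E` a nonzero fractional ideal,
and `E^v = F` otherwise. -/
def vFun : Submodule R F → Submodule R F := fun E =>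
  if ∃ d : R, d ≠ 0 ∧ ∀ x ∈ E, d • x ∈ (1 : Submodule R F) then
    (1 : Submodule R F) / ((1 : Submodule R F) / E)
  else ⊤

/-- The `eab` operation `⋆_a` associated to `⋆`. -/
def aFun (o : Submodule R F → Submodule R F) : Submodule R F → Submodule R F := fun E =>
  ⨆ (G : Submodule R F) (_ : G ≠ ⊥) (_ : G.FG) (_ : G ≤ E),
    ⨆ (H : Submodule R F) (_ : H ≠ ⊥) (_ : H.FG), o (G * H) / o H

/-- `I` is a quasi-`⋆`-ideal: a nonzero integral ideal with `I^⋆ ∩ R = I`. -/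
def isQuasiIdealFun (o : Submodule R F → Submodule R F) (I : Ideal R) : Prop :=
  I ≠ ⊥ ∧ (o (idealSub R F I)).comap (Algebra.linearMap R F) = I

/-- `I` is a quasi-`⋆`-maximal ideal: maximal among proper quasi-`⋆`-ideals. -/
def isQuasiMaximalFun (o : Submodule R F → Submodule R F) (I : Ideal R) : Prop :=
  isQuasiIdealFun R F o I ∧ I ≠ ⊤ ∧
    ∀ J : Ideal R, isQuasiIdealFun R F o J → J ≠ ⊤ → I ≤ J → I = J

/-- The `v`-operation relative to an overring `R'` (an `R`-submodule of `F`):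
`B ↦ (R' : (R' : B))` for `B` a nonzero fractional ideal of `R'`, `F` otherwise. -/
def vRelFun (R' B : Submodule R F) : Submodule R F :=
  if ∃ z ∈ R', z ≠ 0 ∧ ∀ x ∈ B, z * x ∈ R' then R' / (R' / B) else ⊤

/-- The `t`-operation relative to an overring `R'`: finite-type operation associated to
the `v`-operation of `R'` (the union being over nonzero finitely generated
`R'`-submodules contained in `B`). -/
def tRelFun (R' B : Submodule R F) : Submodule R F :=
  ⨆ (G : Submodule R F) (_ : G ≠ ⊥)
    (_ : ∃ S : Finset F, G = R' * Submodule.span R (S : Set F)) (_ : G ≤ B),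
    vRelFun R F R' G

end Generic

section Poly

variable (D K : Type*) [CommRing D] [IsDomain D] [Field K] [Algebra D K] [IsFractionRing D K]

/-- The canonical ring homomorphism `D[X] → K(X)`. -/
def polyToRF : Polynomial D →+* RatFunc K :=
  (algebraMap (Polynomial K) (RatFunc K)).comp (Polynomial.mapRingHom (algebraMap D K))

/-- `K(X)` is an algebra over `D[X]`; in fact it is the quotient field of `D[X]`. -/
instance (priority := 100) : Algebra (Polynomial D) (RatFunc K) := (polyToRF D K).toAlgebra

/-- For a `D`-submodule `E` of `K`, the `D[X]`-submodule `E[X]` of `K(X)`: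
polynomials all of whose coefficients lie in `E`. -/
def polyExt (E : Submodule D K) : Submodule (Polynomial D) (RatFunc K) where
  carrier := { f : RatFunc K | ∃ p : Polynomial K, (∀ n, p.coeff n ∈ E) ∧
      f = algebraMap (Polynomial K) (RatFunc K) p }
  add_mem' := by
    rintro f g ⟨p, hp, rfl⟩ ⟨q, hq, rfl⟩
    exact ⟨p + q, fun n => by simpa using E.add_mem (hp n) (hq n), by simp⟩
  zero_mem' := ⟨0, fun n => by simpa using E.zero_mem, by simp⟩
  smul_mem' := by
    rintro c f ⟨p, hp, rfl⟩
    refine ⟨Polynomial.map (algebraMap D K) c * p, fun n => ?_, ?_⟩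
    · rw [Polynomial.coeff_mul]
      refine Submodule.sum_mem E fun ij _ => ?_
      rw [Polynomial.coeff_map, ← Algebra.smul_def]
      exact E.smul_mem _ (hp ij.2)
    · rw [Algebra.smul_def, RingHom.algebraMap_toAlgebra, map_mul]
      unfold polyToRF
      simp

/-- The contraction `B ∩ K` of a `D[X]`-submodule `B` of `K(X)` to a `D`-submodule of `K`. -/
def contractToBase (B : Submodule (Polynomial D) (RatFunc K)) : Submodule D K where
  carrier := { x : K | algebraMap K (RatFunc K) x ∈ B }
  add_mem' := fun {x y} hx hy => by
    simpa [Set.mem_setOf_eq, map_add] using B.add_mem hx hy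
  zero_mem' := by simpa using B.zero_mem
  smul_mem' := fun d x hx => by
    have h : algebraMap K (RatFunc K) (d • x)
        = (Polynomial.C d : Polynomial D) • (algebraMap K (RatFunc K) x) := by
      rw [Algebra.smul_def d x, map_mul, Algebra.smul_def, RingHom.algebraMap_toAlgebra]
      unfold polyToRF
      simp only [RingHom.coe_comp, Function.comp_apply, Polynomial.coe_mapRingHom,
        Polynomial.map_C, RatFunc.algebraMap_C, RatFunc.algebraMap_eq_C]
    show algebraMap K (RatFunc K) (d • x) ∈ B
    rw [h]
    exact B.smul_mem (Polynomial.C d) hx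

/-- The content `c_D(S)`: the `D`-submodule of `K` generated by the coefficients of all
polynomials belonging to `S`. -/
def contentOf (S : Set (RatFunc K)) : Submodule D K :=
  Submodule.span D { x : K | ∃ p : Polynomial K,
    algebraMap (Polynomial K) (RatFunc K) p ∈ S ∧ ∃ n, p.coeff n = x }

/-- The semistar operation `▲^⋆_T` of `D[X]` associated to a semistar operation `⋆` of `D`
and an overring `T` of `D`:
`A ↦ ⋂ { z⁻¹ (c_D(zA))^⋆[X] : z ∈ (T[X] : A), z ≠ 0 }` if `(T[X] : A) ≠ 0`, else `A ↦ K(X)`. -/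
def bigTriT (o : Submodule D K → Submodule D K) (T : Subalgebra D K) :
    Submodule (Polynomial D) (RatFunc K) → Submodule (Polynomial D) (RatFunc K) := fun A =>
  if ∃ z : RatFunc K, z ≠ 0 ∧ ∀ a ∈ A, z * a ∈ polyExt D K (Subalgebra.toSubmodule T) then
    ⨅ (z : RatFunc K) (_ : z ≠ 0) (_ : ∀ a ∈ A, z * a ∈ polyExt D K (Subalgebra.toSubmodule T)),
      z⁻¹ • polyExt D K (o (contentOf D K (z • (A : Set (RatFunc K)))))
  else ⊤

/-- `▲^⋆ := ▲^⋆_K`, the largest strict extension of `⋆` to `D[X]`. -/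
def bigTri (o : Submodule D K → Submodule D K) :
    Submodule (Polynomial D) (RatFunc K) → Submodule (Polynomial D) (RatFunc K) :=
  bigTriT D K o ⊤

/-- `b` is an extension of `⋆` to `D[X]` : `E^⋆ = (E[X])^b ∩ K`. -/
def IsExtensionFun (o : Submodule D K → Submodule D K)
    (b : Submodule (Polynomial D) (RatFunc K) → Submodule (Polynomial D) (RatFunc K)) : Prop :=
  ∀ E : Submodule D K, E ≠ ⊥ → o E = contractToBase D K (b (polyExt D K E))

/-- `b` is a strict extension of `⋆` to `D[X]` : `(E[X])^b = E^⋆[X]`. -/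
def IsStrictExtensionFun (o : Submodule D K → Submodule D K)
    (b : Submodule (Polynomial D) (RatFunc K) → Submodule (Polynomial D) (RatFunc K)) : Prop :=
  ∀ E : Submodule D K, E ≠ ⊥ → b (polyExt D K E) = polyExt D K (o E)

/-- `⋏^⋆ : A ↦ ⋂ { A^★ : ★ a semistar operation of D[X] extending ⋆ }`. -/
def curlyFun (o : Submodule D K → Submodule D K) :
    Submodule (Polynomial D) (RatFunc K) → Submodule (Polynomial D) (RatFunc K) := fun A =>
  ⨅ (b : Submodule (Polynomial D) (RatFunc K) → Submodule (Polynomial D) (RatFunc K))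
    (_ : IsSemistarOp (Polynomial D) (RatFunc K) b) (_ : IsExtensionFun D K o b), b A

/-- The localization `D_Q` of `D` at a prime ideal `Q`, as a `D`-submodule of `K`. -/
def locSub (Q : Ideal D) : Submodule D K :=
  Submodule.span D { x : K | ∃ s : D, s ∉ Q ∧ s • x ∈ (1 : Submodule D K) }

/-- The content of an ideal `I` of `D[X]`: the `D`-submodule of `K` generated by the
coefficients of the polynomials in `I`. -/
def contentOfIdeal (I : Ideal (Polynomial D)) : Submodule D K :=
  Submodule.span D { x : K | ∃ p ∈ I, ∃ n, algebraMap D K (Polynomial.coeff p n) = x }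

/-- The Nagata ring `D_Q(X)`, as a subset of `K(X)`: fractions `f/g` with
`f, g ∈ D_Q[X]` and the coefficients of `g` generating the unit ideal of `D_Q`. -/
def nagataSet (Q : Ideal D) : Set (RatFunc K) :=
  { u : RatFunc K | ∃ g : Polynomial K, (∀ n, g.coeff n ∈ locSub D K Q) ∧
      locSub D K Q * Submodule.span D { x : K | ∃ n, g.coeff n = x } = locSub D K Q ∧
      u * algebraMap (Polynomial K) (RatFunc K) g ∈ polyExt D K (locSub D K Q) }

end Poly

section GenericLemmas

variable {R F : Type*} [CommRing R] [Field F] [Algebra R F]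

theorem mem_one_iff {x : F} : x ∈ (1 : Submodule R F) ↔ ∃ y : R, algebraMap R F y = x :=
  Submodule.mem_one

theorem one_mem_one : (1 : F) ∈ (1 : Submodule R F) :=
  mem_one_iff.mpr ⟨1, map_one _⟩

theorem mul_mem_one {x y : F} (hx : x ∈ (1 : Submodule R F)) (hy : y ∈ (1 : Submodule R F)) :
    x * y ∈ (1 : Submodule R F) := by
  obtain ⟨a, rfl⟩ := mem_one_iff.mp hx
  obtain ⟨b, rfl⟩ := mem_one_iff.mp hy
  exact mem_one_iff.mpr ⟨a * b, by rw [map_mul]⟩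

theorem one_div_one' : ((1 : Submodule R F) / 1) = 1 := by
  apply le_antisymm
  · intro x hx
    rw [Submodule.mem_div_iff_forall_mul_mem] at hx
    simpa using hx 1 one_mem_one
  · intro x hx
    rw [Submodule.mem_div_iff_forall_mul_mem]
    exact fun y hy => mul_mem_one hx hy

theorem le_one_div_of_le_one {E : Submodule R F} (hE : E ≤ 1) : 1 ≤ 1 / E := by
  intro x hx
  rw [Submodule.mem_div_iff_forall_mul_mem]
  exact fun y hy => mul_mem_one hx (hE hy)

theorem le_one_div_one_div (E : Submodule R F) : E ≤ 1 / (1 / E) := by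
  intro x hx
  rw [Submodule.mem_div_iff_forall_mul_mem]
  intro y hy
  rw [Submodule.mem_div_iff_forall_mul_mem] at hy
  rw [mul_comm]
  exact hy x hx

theorem one_div_le_one_div' {E G : Submodule R F} (h : E ≤ G) : 1 / G ≤ 1 / E := by
  intro x hx
  rw [Submodule.mem_div_iff_forall_mul_mem] at hx ⊢
  exact fun y hy => hx y (h hy)

variable [Nontrivial R]

theorem vFun_of_le_one {E : Submodule R F} (hE : E ≤ 1) : vFun R F E = 1 / (1 / E) := by
  rw [vFun, if_pos]
  exact ⟨1, one_ne_zero, fun x hx => by simpa using hE hx⟩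

theorem vFun_one : vFun R F 1 = 1 := by
  rw [vFun_of_le_one le_rfl, one_div_one', one_div_one']

theorem vFun_le_one {E : Submodule R F} (hE : E ≤ 1) : vFun R F E ≤ 1 := by
  rw [vFun_of_le_one hE]
  calc 1 / (1 / E) ≤ 1 / (1 : Submodule R F) := one_div_le_one_div' (le_one_div_of_le_one hE)
  _ = 1 := one_div_one'

theorem le_vFun (E : Submodule R F) : E ≤ vFun R F E := by
  rw [vFun]
  split_ifs
  · exact le_one_div_one_div E
  · exact le_top

theorem vFun_eq_vFun_one_iff {E : Submodule R F} (hE : E ≤ 1) :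
    vFun R F E = vFun R F 1 ↔ 1 / E ≤ 1 := by
  rw [vFun_one, vFun_of_le_one hE]
  constructor
  · intro h
    calc 1 / E ≤ 1 / (1 / (1 / E)) := le_one_div_one_div _
    _ = 1 / (1 : Submodule R F) := by rw [h]
    _ = 1 := one_div_one'
  · intro h
    have h' : 1 / E = 1 := le_antisymm h (le_one_div_of_le_one hE)
    rw [h', one_div_one']

theorem mem_colonIdeal {E : Submodule R F} {J : Ideal R} {x : F} :
    x ∈ colonIdeal R F E J ↔ ∀ a ∈ J, a • x ∈ E := Iff.rfl

theorem mem_idealSub {J : Ideal R} {y : F} :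
    y ∈ idealSub R F J ↔ ∃ a ∈ J, algebraMap R F a = y := by
  simp [idealSub]

theorem idealSub_le_one (J : Ideal R) : idealSub R F J ≤ 1 := by
  intro y hy
  obtain ⟨a, _, rfl⟩ := mem_idealSub.mp hy
  exact mem_one_iff.mpr ⟨a, rfl⟩

theorem idealSub_top : idealSub R F ⊤ = 1 := by
  apply le_antisymm (idealSub_le_one _)
  intro x hx
  obtain ⟨a, rfl⟩ := mem_one_iff.mp hx
  exact mem_idealSub.mpr ⟨a, trivial, rfl⟩

/-- Key characterization: `x` is in `1/(idealSub J)` iff `a • x ∈ 1` for all `a ∈ J`. -/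
theorem mem_one_div_idealSub_iff {J : Ideal R} {x : F} :
    x ∈ (1 : Submodule R F) / idealSub R F J ↔ ∀ a ∈ J, a • x ∈ (1 : Submodule R F) := by
  rw [Submodule.mem_div_iff_forall_mul_mem]
  constructor
  · intro h a ha
    have := h (algebraMap R F a) (mem_idealSub.mpr ⟨a, ha, rfl⟩)
    rwa [mul_comm, ← Algebra.smul_def] at this
  · intro h y hy
    obtain ⟨a, ha, rfl⟩ := mem_idealSub.mp hy
    rw [mul_comm, ← Algebra.smul_def]
    exact h a ha

theorem tildeFun_le {o : Submodule R F → Submodule R F} {E T : Submodule R F}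
    (h : ∀ J : Ideal R, J ≠ ⊥ → J.FG → o (idealSub R F J) = o 1 → colonIdeal R F E J ≤ T) :
    tildeFun R F o E ≤ T :=
  iSup_le fun J => iSup_le fun h1 => iSup_le fun h2 => iSup_le fun h3 => h J h1 h2 h3

theorem le_tildeFun_of {o : Submodule R F → Submodule R F} {E : Submodule R F}
    (J : Ideal R) (h1 : J ≠ ⊥) (h2 : J.FG) (h3 : o (idealSub R F J) = o 1) :
    colonIdeal R F E J ≤ tildeFun R F o E :=
  le_iSup_of_le J (le_iSup_of_le h1 (le_iSup_of_le h2 (le_iSup_of_le h3 le_rfl)))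

theorem top_ne_bot_ideal : (⊤ : Ideal R) ≠ ⊥ := fun h =>
  one_ne_zero ((Submodule.eq_bot_iff _).mp h 1 trivial)

theorem le_tildeFun (o : Submodule R F → Submodule R F) (E : Submodule R F) :
    E ≤ tildeFun R F o E := by
  refine le_trans ?_ (le_tildeFun_of ⊤ top_ne_bot_ideal ⟨{1}, by simp⟩ (by rw [idealSub_top]))
  intro x hx
  exact fun a _ => E.smul_mem a hx

theorem tildeFun_mono {o : Submodule R F → Submodule R F} {E E' : Submodule R F} (h : E ≤ E') :
    tildeFun R F o E ≤ tildeFun R F o E' := by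
  refine tildeFun_le fun J h1 h2 h3 => le_trans ?_ (le_tildeFun_of J h1 h2 h3)
  exact fun x hx a ha => h (hx a ha)

theorem tildeFun_vFun_le_one {E : Submodule R F} (hE : E ≤ 1) :
    tildeFun R F (vFun R F) E ≤ 1 := by
  refine tildeFun_le fun J h1 h2 h3 => ?_
  have hdiv : 1 / idealSub R F J ≤ 1 :=
    (vFun_eq_vFun_one_iff (idealSub_le_one J)).mp h3
  intro x hx
  exact hdiv (mem_one_div_idealSub_iff.mpr fun a ha => hE (hx a ha))

theorem tildeFun_vFun_one : tildeFun R F (vFun R F) 1 = 1 :=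
  le_antisymm (tildeFun_vFun_le_one le_rfl) (le_tildeFun _ _)

theorem tildeFun_vFun_le_vFun (E : Submodule R F) :
    tildeFun R F (vFun R F) E ≤ vFun R F E := by
  rw [vFun]
  split_ifs
  · refine tildeFun_le fun J h1 h2 h3 => ?_
    have hdiv : 1 / idealSub R F J ≤ 1 :=
      (vFun_eq_vFun_one_iff (idealSub_le_one J)).mp h3
    intro x hx
    rw [Submodule.mem_div_iff_forall_mul_mem]
    intro y hy
    rw [Submodule.mem_div_iff_forall_mul_mem] at hy
    refine hdiv (mem_one_div_idealSub_iff.mpr fun a ha => ?_)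
    have : a • (x * y) = y * (a • x) := by
      rw [Algebra.smul_def, Algebra.smul_def]; ring
    rw [this]
    exact hy _ (hx a ha)
  · exact le_top

theorem tildeFun_congr {o₁ o₂ : Submodule R F → Submodule R F}
    (h : ∀ J : Ideal R, J ≠ ⊥ → J.FG →
      ((o₁ (idealSub R F J) = o₁ 1) ↔ (o₂ (idealSub R F J) = o₂ 1)))
    (E : Submodule R F) : tildeFun R F o₁ E = tildeFun R F o₂ E := by
  apply le_antisymm
  · exact tildeFun_le fun J h1 h2 h3 => le_tildeFun_of J h1 h2 ((h J h1 h2).mp h3)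
  · exact tildeFun_le fun J h1 h2 h3 => le_tildeFun_of J h1 h2 ((h J h1 h2).mpr h3)

end GenericLemmas

section PolyLemmas

variable {D K : Type*} [CommRing D] [IsDomain D] [Field K] [Algebra D K] [IsFractionRing D K]

theorem algebraMap_polyRing_eq :
    algebraMap (Polynomial D) (RatFunc K) = polyToRF D K := rfl

theorem algebraMap_polyRing_apply (q : Polynomial D) :
    algebraMap (Polynomial D) (RatFunc K) q
      = algebraMap (Polynomial K) (RatFunc K) (q.map (algebraMap D K)) := rfl

theorem KX_injective : Function.Injective (algebraMap (Polynomial K) (RatFunc K)) :=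
  RatFunc.algebraMap_injective K

theorem polyRing_injective :
    Function.Injective (algebraMap (Polynomial D) (RatFunc K)) := by
  rw [algebraMap_polyRing_eq]
  exact (RatFunc.algebraMap_injective K).comp
    (Polynomial.map_injective _ (IsFractionRing.injective D K))

theorem exists_map_of_coeffs_mem_one {p : Polynomial K}
    (h : ∀ n, p.coeff n ∈ (1 : Submodule D K)) :
    ∃ q : Polynomial D, p = q.map (algebraMap D K) := by
  have hc : ∀ n, ∃ d : D, algebraMap D K d = p.coeff n := fun n => mem_one_iff.mp (h n)
  choose c hcspec using hc
  refine ⟨∑ i ∈ p.support, Polynomial.monomial i (c i), ?_⟩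
  ext n
  rw [Polynomial.coeff_map]
  rw [Polynomial.finset_sum_coeff]
  simp only [Polynomial.coeff_monomial]
  by_cases hn : n ∈ p.support
  · rw [Finset.sum_eq_single n (fun b _ hb => by rw [if_neg hb]) (fun h => absurd hn h)]
    rw [if_pos rfl, hcspec]
  · rw [Finset.sum_eq_zero fun b hb => ?_, map_zero]
    · exact Polynomial.notMem_support_iff.mp hn
    · rw [if_neg]; rintro rfl; exact hn hb

theorem mem_polyExt_iff {E : Submodule D K} {f : RatFunc K} :
    f ∈ polyExt D K E ↔ ∃ p : Polynomial K, (∀ n, p.coeff n ∈ E) ∧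
      f = algebraMap (Polynomial K) (RatFunc K) p := Iff.rfl

theorem algebraMap_mem_polyExt_iff {E : Submodule D K} {p : Polynomial K} :
    algebraMap (Polynomial K) (RatFunc K) p ∈ polyExt D K E ↔ ∀ n, p.coeff n ∈ E := by
  constructor
  · rintro ⟨p', hp', hpp'⟩
    obtain rfl := KX_injective hpp'
    exact hp'
  · intro h
    exact ⟨p, h, rfl⟩

theorem polyExt_mono {E E' : Submodule D K} (h : E ≤ E') : polyExt D K E ≤ polyExt D K E' := by
  rintro f ⟨p, hp, rfl⟩
  exact ⟨p, fun n => h (hp n), rfl⟩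

theorem polyExt_one : polyExt D K (1 : Submodule D K)
    = (1 : Submodule (Polynomial D) (RatFunc K)) := by
  apply le_antisymm
  · rintro f ⟨p, hp, rfl⟩
    obtain ⟨q, rfl⟩ := exists_map_of_coeffs_mem_one hp
    exact mem_one_iff.mpr ⟨q, rfl⟩
  · intro x hx
    obtain ⟨q, rfl⟩ := mem_one_iff.mp hx
    rw [algebraMap_polyRing_apply]
    refine algebraMap_mem_polyExt_iff.mpr fun n => ?_
    rw [Polynomial.coeff_map]
    exact mem_one_iff.mpr ⟨q.coeff n, rfl⟩

theorem mem_polyExt_top {x : RatFunc K} (hx : x ∈ (1 : Submodule (Polynomial D) (RatFunc K))) :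
    x ∈ polyExt D K (Subalgebra.toSubmodule (⊤ : Subalgebra D K)) := by
  obtain ⟨q, rfl⟩ := mem_one_iff.mp hx
  rw [algebraMap_polyRing_apply]
  exact algebraMap_mem_polyExt_iff.mpr fun n => by simp

theorem coeff_mem_contentOf {S : Set (RatFunc K)} {p : Polynomial K}
    (h : algebraMap (Polynomial K) (RatFunc K) p ∈ S) (n : ℕ) :
    p.coeff n ∈ contentOf D K S :=
  Submodule.subset_span ⟨p, h, n, rfl⟩

theorem contentOf_le_one {S : Set (RatFunc K)}
    (h : ∀ f ∈ S, f ∈ (1 : Submodule (Polynomial D) (RatFunc K))) :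
    contentOf D K S ≤ (1 : Submodule D K) := by
  rw [contentOf, Submodule.span_le]
  rintro x ⟨p, hp, n, rfl⟩
  obtain ⟨q, hq⟩ := mem_one_iff.mp (h _ hp)
  rw [algebraMap_polyRing_apply] at hq
  obtain rfl : p = q.map (algebraMap D K) := KX_injective hq.symm
  rw [Polynomial.coeff_map]
  exact mem_one_iff.mpr ⟨q.coeff n, rfl⟩

theorem mem_inv_smul_iff {z : RatFunc K} (hz : z ≠ 0)
    {S : Submodule (Polynomial D) (RatFunc K)} {x : RatFunc K} :
    x ∈ z⁻¹ • S ↔ z * x ∈ S := by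
  rw [← SetLike.mem_coe, Submodule.coe_pointwise_smul]
  constructor
  · rintro ⟨s, hs, rfl⟩
    show z * (z⁻¹ • s) ∈ S
    rwa [smul_eq_mul, mul_inv_cancel_left₀ hz]
  · intro h
    refine ⟨z * x, h, ?_⟩
    show z⁻¹ • (z * x) = x
    rw [smul_eq_mul, inv_mul_cancel_left₀ hz]

end PolyLemmas

section BigTriLemmas

variable {D K : Type*} [CommRing D] [IsDomain D] [Field K] [Algebra D K] [IsFractionRing D K]

/-- The key property: for every `z ≠ 0` with `zA ⊆ K[X]`, `z ∈ (c(zA))^o[X]`. -/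
def QProp (o : Submodule D K → Submodule D K) (A : Submodule (Polynomial D) (RatFunc K)) : Prop :=
  ∀ z : RatFunc K, z ≠ 0 →
    (∀ a ∈ A, z * a ∈ polyExt D K (Subalgebra.toSubmodule (⊤ : Subalgebra D K))) →
    z ∈ polyExt D K (o (contentOf D K (z • (A : Set (RatFunc K)))))

theorem mul_polyExt_one_mem {E : Submodule D K} {x y : RatFunc K}
    (hx : x ∈ polyExt D K E) (hy : y ∈ polyExt D K 1) : x * y ∈ polyExt D K E := by
  obtain ⟨p, hp, rfl⟩ := hx
  obtain ⟨q, hq, rfl⟩ := hy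
  rw [← map_mul]
  refine algebraMap_mem_polyExt_iff.mpr fun n => ?_
  rw [Polynomial.coeff_mul]
  refine Submodule.sum_mem E fun uv _ => ?_
  obtain ⟨d, hd⟩ := mem_one_iff.mp (hq uv.2)
  rw [← hd, mul_comm, ← Algebra.smul_def]
  exact E.smul_mem d (hp uv.1)

theorem bigTri_cond_holds {A : Submodule (Polynomial D) (RatFunc K)} (hA : A ≤ 1) :
    ∃ z : RatFunc K, z ≠ 0 ∧ ∀ a ∈ A, z * a ∈
      polyExt D K (Subalgebra.toSubmodule (⊤ : Subalgebra D K)) :=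
  ⟨1, one_ne_zero, fun a ha => by rw [one_mul]; exact mem_polyExt_top (hA ha)⟩

theorem QProp_one {o : Submodule D K → Submodule D K} (hoext : ∀ E, E ≤ o E) :
    QProp o (1 : Submodule (Polynomial D) (RatFunc K)) := by
  intro z hz h
  have h1 := h 1 one_mem_one
  rw [mul_one] at h1
  obtain ⟨p, _, rfl⟩ := h1
  refine algebraMap_mem_polyExt_iff.mpr fun n => ?_
  refine hoext _ (coeff_mem_contentOf ?_ n)
  have hmem := Set.smul_mem_smul_set (a := algebraMap (Polynomial K) (RatFunc K) p)
    (show (1 : RatFunc K) ∈ ((1 : Submodule (Polynomial D) (RatFunc K)) : Set (RatFunc K)) from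
      one_mem_one)
  rwa [smul_eq_mul, mul_one] at hmem

theorem bigTri_le_polyExt_one {o : Submodule D K → Submodule D K}
    (hle1 : ∀ E : Submodule D K, E ≤ 1 → o E ≤ 1)
    {A : Submodule (Polynomial D) (RatFunc K)} (hA : A ≤ 1) :
    bigTri D K o A ≤ polyExt D K 1 := by
  rw [bigTri, bigTriT, if_pos (bigTri_cond_holds hA)]
  refine le_trans (iInf_le_of_le 1 (iInf_le_of_le one_ne_zero (iInf_le_of_le
    (fun a ha => by rw [one_mul]; exact mem_polyExt_top (hA ha)) le_rfl))) ?_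
  rw [inv_one, one_smul, one_smul]
  refine polyExt_mono (hle1 _ (contentOf_le_one fun f hf => hA hf))

theorem polyExt_one_le_bigTri {o : Submodule D K → Submodule D K}
    {A : Submodule (Polynomial D) (RatFunc K)} (hA : A ≤ 1) (hQ : QProp o A) :
    polyExt D K 1 ≤ bigTri D K o A := by
  rw [bigTri, bigTriT, if_pos (bigTri_cond_holds hA)]
  refine le_iInf fun z => le_iInf fun hz => le_iInf fun hcond => ?_
  intro e he
  rw [mem_inv_smul_iff hz]
  exact mul_polyExt_one_mem (hQ z hz hcond) he

theorem one_mem_bigTri_one {o : Submodule D K → Submodule D K} (hoext : ∀ E, E ≤ o E) :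
    (1 : RatFunc K) ∈ bigTri D K o (1 : Submodule (Polynomial D) (RatFunc K)) := by
  refine polyExt_one_le_bigTri le_rfl (QProp_one hoext) ?_
  rw [polyExt_one]
  exact one_mem_one

theorem bigTri_eq_one_iff {o : Submodule D K → Submodule D K}
    (hle1 : ∀ E : Submodule D K, E ≤ 1 → o E ≤ 1) (hoext : ∀ E, E ≤ o E)
    {A : Submodule (Polynomial D) (RatFunc K)} (hA : A ≤ 1) :
    bigTri D K o A = bigTri D K o 1 ↔ QProp o A := by
  constructor
  · intro heq
    have h1 : (1 : RatFunc K) ∈ bigTri D K o A := heq ▸ one_mem_bigTri_one hoext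
    rw [bigTri, bigTriT, if_pos (bigTri_cond_holds hA)] at h1
    intro z hz hcond
    have := h1
    simp only [Submodule.mem_iInf] at this
    have h2 := this z hz hcond
    rwa [mem_inv_smul_iff hz, mul_one] at h2
  · intro hQ
    have e1 : bigTri D K o A = polyExt D K 1 :=
      le_antisymm (bigTri_le_polyExt_one hle1 hA) (polyExt_one_le_bigTri hA hQ)
    have e2 : bigTri D K o (1 : Submodule (Polynomial D) (RatFunc K)) = polyExt D K 1 :=
      le_antisymm (bigTri_le_polyExt_one hle1 le_rfl)
        (polyExt_one_le_bigTri le_rfl (QProp_one hoext))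
    rw [e1, e2]

end BigTriLemmas

section Staircase

variable {D K : Type*} [CommRing D] [IsDomain D] [Field K] [Algebra D K] [IsFractionRing D K]

/-- The ideal of scalars `a` such that `a • (Z.coeff i) ∈ W` for all `i`. -/
def smulColon (W : Submodule D K) (Z : Polynomial K) : Ideal D :=
  ⨅ i : ℕ, W.comap (LinearMap.toSpanSingleton D K (Z.coeff i))

theorem mem_smulColon {W : Submodule D K} {Z : Polynomial K} {a : D} :
    a ∈ smulColon W Z ↔ ∀ i, a • Z.coeff i ∈ W := by
  simp [smulColon, Submodule.mem_iInf, LinearMap.toSpanSingleton_apply]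

/-- The ideal generated by the coefficients of `p` of index `≥ j`. -/
def coeffIdealGe (p : Polynomial D) (j : ℕ) : Ideal D :=
  Ideal.span {x | ∃ j', j ≤ j' ∧ p.coeff j' = x}

theorem smul_helper (c d : D) (y : K) :
    c • (y * algebraMap D K d) = (c * d) • y := by
  rw [Algebra.smul_def, Algebra.smul_def, map_mul]; ring

theorem staircase_step {W : Submodule D K} {Z : Polynomial K} {p : Polynomial D}
    (hW : ∀ t, (Z * p.map (algebraMap D K)).coeff t ∈ W) (j : ℕ)
    {N' : ℕ} (hN' : coeffIdealGe p (j+1) ^ N' ≤ smulColon W Z) :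
    ∃ N, coeffIdealGe p j ^ N ≤ smulColon W Z := by
  have U : ∀ t, t ≤ N' → ∃ α, ∀ h ∈ coeffIdealGe p (j+1) ^ (N' - t), ∀ i,
      ((p.coeff j)^α * h) • Z.coeff i ∈ W := by
    intro t
    induction t with
    | zero =>
      intro _
      refine ⟨0, fun h hh i => ?_⟩
      rw [Nat.sub_zero] at hh
      simpa using mem_smulColon.mp (hN' hh) i
    | succ t ih =>
      intro ht
      obtain ⟨α₁, hα₁⟩ := ih (by omega)
      have hβ : N' - t = (N' - (t+1)) + 1 := by omega
      set β := N' - (t+1) with hβdef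
      have V : ∀ s, ∃ α, ∀ h ∈ coeffIdealGe p (j+1) ^ β, ∀ i, Z.natDegree + 1 ≤ i + s →
          ((p.coeff j)^α * h) • Z.coeff i ∈ W := by
        intro s
        induction s with
        | zero =>
          refine ⟨0, fun h _ i hi => ?_⟩
          rw [Polynomial.coeff_eq_zero_of_natDegree_lt (p := Z) (n := i) (by omega), smul_zero]
          exact W.zero_mem
        | succ s ihs =>
          obtain ⟨α₂, hα₂⟩ := ihs
          refine ⟨α₁ + α₂ + 1, fun h hh i hi => ?_⟩
          by_cases hcase : Z.natDegree + 1 ≤ i + s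
          · have hz := hα₂ h hh i hcase
            have heq : (p.coeff j ^ (α₁ + α₂ + 1) * h) • Z.coeff i
                = (p.coeff j ^ (α₁ + 1)) • ((p.coeff j ^ α₂ * h) • Z.coeff i) := by
              rw [← mul_smul]; congr 1; ring
            rw [heq]
            exact W.smul_mem _ hz
          · -- the main identity case
            have hrepr : Z.coeff i * algebraMap D K (p.coeff j)
                = (Z * p.map (algebraMap D K)).coeff (i + j)
                  - ∑ x ∈ (Finset.HasAntidiagonal.antidiagonal (i+j)).erase (i, j),
                      Z.coeff x.1 * algebraMap D K (p.coeff x.2) := by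
              rw [Polynomial.coeff_mul, ← Finset.sum_erase_add _ _
                (show ((i, j) : ℕ × ℕ) ∈ Finset.HasAntidiagonal.antidiagonal (i + j) from
                  Finset.HasAntidiagonal.mem_antidiagonal.mpr rfl)]
              simp only [Polynomial.coeff_map]
              rw [add_sub_cancel_left]
            have heq : (p.coeff j ^ (α₁ + α₂ + 1) * h) • Z.coeff i
                = (p.coeff j ^ (α₁ + α₂) * h) • (Z.coeff i * algebraMap D K (p.coeff j)) := by
              rw [smul_helper]; congr 1; ring
            rw [heq, hrepr, smul_sub]
            refine Submodule.sub_mem W (W.smul_mem _ (hW (i+j))) ?_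
            rw [Finset.smul_sum]
            refine Submodule.sum_mem W fun x hx => ?_
            have hxa : x.1 + x.2 = i + j :=
              Finset.HasAntidiagonal.mem_antidiagonal.mp (Finset.mem_of_mem_erase hx)
            have hxne : x ≠ (i, j) := Finset.ne_of_mem_erase hx
            have hune : x.1 ≠ i := by
              intro hxi
              apply hxne
              have : x.2 = j := by omega
              exact Prod.ext hxi this
            rw [smul_helper]
            rcases lt_or_gt_of_ne hune with hu | hu
            · -- x.1 < i, so x.2 > j : coefficient in the higher ideal
              have hpv : p.coeff x.2 ∈ coeffIdealGe p (j+1) :=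
                Ideal.subset_span ⟨x.2, by omega, rfl⟩
              have hhp : h * p.coeff x.2 ∈ coeffIdealGe p (j+1) ^ (N' - t) := by
                rw [hβ, pow_succ]
                exact Ideal.mul_mem_mul hh hpv
              have hmem := hα₁ _ hhp x.1
              have heq2 : (p.coeff j ^ (α₁ + α₂) * h * p.coeff x.2) • Z.coeff x.1
                  = (p.coeff j ^ α₂) •
                    ((p.coeff j ^ α₁ * (h * p.coeff x.2)) • Z.coeff x.1) := by
                rw [← mul_smul]; congr 1; ring
              rw [heq2]
              exact W.smul_mem _ hmem
            · -- x.1 > i : use inner induction hypothesis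
              have hmem := hα₂ h hh x.1 (by omega)
              have heq2 : (p.coeff j ^ (α₁ + α₂) * h * p.coeff x.2) • Z.coeff x.1
                  = (p.coeff j ^ α₁ * p.coeff x.2) •
                    ((p.coeff j ^ α₂ * h) • Z.coeff x.1) := by
                rw [← mul_smul]; congr 1; ring
              rw [heq2]
              exact W.smul_mem _ hmem
      obtain ⟨α₂, hα₂⟩ := V (Z.natDegree + 1)
      exact ⟨α₂, fun h hh i => hα₂ h hh i (by omega)⟩
  obtain ⟨α₀, hα₀⟩ := U N' le_rfl
  rw [Nat.sub_self, pow_zero, Ideal.one_eq_top] at hα₀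
  refine ⟨α₀ + N', ?_⟩
  have hsplit : coeffIdealGe p j = Ideal.span {p.coeff j} ⊔ coeffIdealGe p (j+1) := by
    rw [coeffIdealGe, coeffIdealGe, ← Ideal.span_union]
    congr 1
    ext x
    constructor
    · rintro ⟨j', hj', rfl⟩
      rcases eq_or_lt_of_le hj' with h | h
      · exact Or.inl (by rw [← h]; exact rfl)
      · exact Or.inr ⟨j', by omega, rfl⟩
    · rintro (h | ⟨j', hj', rfl⟩)
      · exact ⟨j, le_rfl, h.symm⟩
      · exact ⟨j', by omega, rfl⟩
  rw [hsplit]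
  refine le_trans Ideal.sup_pow_add_le_pow_sup_pow (sup_le ?_ hN')
  rw [Ideal.span_singleton_pow]
  intro a ha
  obtain ⟨r, rfl⟩ := Ideal.mem_span_singleton.mp ha
  refine mem_smulColon.mpr fun i => hα₀ r trivial i

theorem staircase {W : Submodule D K} {Z : Polynomial K} {p : Polynomial D}
    (hW : ∀ t, (Z * p.map (algebraMap D K)).coeff t ∈ W) :
    ∃ N, coeffIdealGe p 0 ^ N ≤ smulColon W Z := by
  have main : ∀ t, ∃ N, coeffIdealGe p (p.natDegree + 1 - t) ^ N ≤ smulColon W Z := by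
    intro t
    induction t with
    | zero =>
      refine ⟨1, ?_⟩
      rw [Nat.sub_zero, pow_one]
      have hbot : coeffIdealGe p (p.natDegree + 1) ≤ ⊥ := by
        rw [coeffIdealGe, Ideal.span_le]
        rintro x ⟨j', hj', rfl⟩
        have := Polynomial.coeff_eq_zero_of_natDegree_lt (show p.natDegree < j' by omega)
        simp [this]
      exact le_trans hbot bot_le
    | succ t ih =>
      obtain ⟨N', hN'⟩ := ih
      by_cases hcase : t ≤ p.natDegree
      · have heq : p.natDegree + 1 - t = (p.natDegree + 1 - (t+1)) + 1 := by omega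
        rw [heq] at hN'
        exact staircase_step hW _ hN'
      · have heq : p.natDegree + 1 - t = p.natDegree + 1 - (t+1) := by omega
        rw [heq] at hN'
        exact ⟨N', hN'⟩
  have h := main (p.natDegree + 1)
  rwa [Nat.sub_self] at h

end Staircase

section Transfer

variable {D K : Type*} [CommRing D] [IsDomain D] [Field K] [Algebra D K] [IsFractionRing D K]

theorem QProp_to_C {o : Submodule D K → Submodule D K}
    (hle1 : ∀ E : Submodule D K, E ≤ 1 → o E ≤ 1)
    {J : Ideal (Polynomial D)} (hQ : QProp o (idealSub (Polynomial D) (RatFunc K) J)) :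
    (1 : Submodule (Polynomial D) (RatFunc K)) / idealSub (Polynomial D) (RatFunc K) J ≤ 1 := by
  intro u hu
  rcases eq_or_ne u 0 with rfl | hu0
  · exact Submodule.zero_mem _
  rw [Submodule.mem_div_iff_forall_mul_mem] at hu
  have h1 := hQ u hu0 (fun a ha => mem_polyExt_top (hu a ha))
  have hc : contentOf D K
      (u • ((idealSub (Polynomial D) (RatFunc K) J : Submodule _ _) : Set (RatFunc K))) ≤ 1 := by
    refine contentOf_le_one fun f hf => ?_
    obtain ⟨a, ha, rfl⟩ := Set.mem_smul_set.mp hf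
    rw [smul_eq_mul]; exact hu a ha
  have h2 := polyExt_mono (hle1 _ hc) h1
  rwa [polyExt_one] at h2

theorem algebraMap_K_eq (x : K) :
    algebraMap K (RatFunc K) x = algebraMap (Polynomial K) (RatFunc K) (Polynomial.C x) := by
  rw [RatFunc.algebraMap_C, RatFunc.algebraMap_eq_C]

theorem mem_one_K_iff {x : K} :
    algebraMap K (RatFunc K) x ∈ (1 : Submodule (Polynomial D) (RatFunc K))
      ↔ x ∈ (1 : Submodule D K) := by
  constructor
  · intro h
    obtain ⟨q, hq⟩ := mem_one_iff.mp h
    rw [algebraMap_polyRing_apply, algebraMap_K_eq] at hq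
    have := KX_injective hq
    have hx : x = algebraMap D K (q.coeff 0) := by
      have := congrArg (fun r => Polynomial.coeff r 0) this
      simpa [Polynomial.coeff_map, eq_comm] using this
    exact mem_one_iff.mpr ⟨q.coeff 0, hx.symm⟩
  · intro h
    obtain ⟨d, hd⟩ := mem_one_iff.mp h
    refine mem_one_iff.mpr ⟨Polynomial.C d, ?_⟩
    rw [algebraMap_polyRing_apply, Polynomial.map_C, ← algebraMap_K_eq, hd]

/-- the `D[X]`-linear map `q ↦ u * algebraMap q`. -/
def mulAlg (u : RatFunc K) : Polynomial D →ₗ[Polynomial D] RatFunc K where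
  toFun q := u * algebraMap (Polynomial D) (RatFunc K) q
  map_add' := by intro a b; rw [map_add, mul_add]
  map_smul' := by
    intro r q
    simp only [smul_eq_mul, map_mul, RingHom.id_apply, Algebra.smul_def]
    ring

theorem span_transfer {S : Finset (Polynomial D)} {J : Ideal (Polynomial D)}
    (hS : Ideal.span (S : Set (Polynomial D)) = J) {u : RatFunc K}
    (h : ∀ p ∈ S, u * algebraMap (Polynomial D) (RatFunc K) p ∈
      (1 : Submodule (Polynomial D) (RatFunc K))) :
    ∀ a ∈ idealSub (Polynomial D) (RatFunc K) J,
      u * a ∈ (1 : Submodule (Polynomial D) (RatFunc K)) := by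
  have hJle : J ≤ Submodule.comap (mulAlg (K := K) u)
      (1 : Submodule (Polynomial D) (RatFunc K)) := by
    rw [← hS, Ideal.span_le]
    intro p hp
    exact h p hp
  intro a ha
  obtain ⟨q, hq, rfl⟩ := mem_idealSub.mp ha
  exact hJle hq

/-- combining powers over a finite set of ideals. -/
theorem finset_sup_pow_le {ι : Type*} (S : Finset ι) (f : ι → Ideal D) (Q : Ideal D)
    (h : ∀ i ∈ S, ∃ N, f i ^ N ≤ Q) : ∃ M, (S.sup f) ^ M ≤ Q := by
  classical
  induction S using Finset.induction_on with
  | empty => exact ⟨1, by simpa using bot_le⟩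
  | @insert a s hnotmem ih =>
    obtain ⟨N, hN⟩ := h a (Finset.mem_insert_self a s)
    obtain ⟨M, hM⟩ := ih fun i hi => h i (Finset.mem_insert_of_mem hi)
    refine ⟨N + M, ?_⟩
    rw [Finset.sup_insert]
    exact le_trans Ideal.sup_pow_add_le_pow_sup_pow (sup_le hN hM)

end Transfer

section ZPoly

variable {D K : Type*} [CommRing D] [IsDomain D] [Field K] [Algebra D K] [IsFractionRing D K]

theorem z_is_poly {J : Ideal (Polynomial D)} {S : Finset (Polynomial D)}
    (hS : Ideal.span (S : Set (Polynomial D)) = J)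
    (hC : (1 : Submodule (Polynomial D) (RatFunc K)) / idealSub (Polynomial D) (RatFunc K) J ≤ 1)
    {z : RatFunc K} (hz : z ≠ 0)
    (hpolys : ∀ a ∈ idealSub (Polynomial D) (RatFunc K) J, z * a ∈
      polyExt D K (Subalgebra.toSubmodule (⊤ : Subalgebra D K))) :
    ∃ Z : Polynomial K, z = algebraMap (Polynomial K) (RatFunc K) Z := by
  classical
  -- step 1: the denominator of z divides `map p` for each `p ∈ S`
  have hdvd : ∀ p : Polynomial D, ∃ g : Polynomial K,
      p ∈ S → p.map (algebraMap D K) = z.denom * g := by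
    intro p
    by_cases hpS : p ∈ S
    · by_cases hp0 : p = 0
      · exact ⟨0, fun _ => by simp [hp0]⟩
      · have hmem : algebraMap (Polynomial D) (RatFunc K) p
            ∈ idealSub (Polynomial D) (RatFunc K) J :=
          mem_idealSub.mpr ⟨p, hS ▸ Ideal.subset_span hpS, rfl⟩
        obtain ⟨g, _, hg⟩ := hpolys _ hmem
        have hm0 : p.map (algebraMap D K) ≠ 0 := by
          intro h
          exact hp0 (Polynomial.map_injective _ (IsFractionRing.injective D K)
            (by rw [h, Polynomial.map_zero]))
        have hzeq : z = algebraMap (Polynomial K) (RatFunc K) g /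
            algebraMap (Polynomial K) (RatFunc K) (p.map (algebraMap D K)) := by
          rw [eq_div_iff (RatFunc.algebraMap_ne_zero hm0)]
          rw [algebraMap_polyRing_apply] at hg
          exact hg
        obtain ⟨g', hg'⟩ := (RatFunc.denom_dvd hm0).mpr ⟨g, hzeq⟩
        exact ⟨g', fun _ => hg'⟩
    · exact ⟨0, fun h => absurd h hpS⟩
  choose g hg using hdvd
  -- step 2: common denominator for the coefficients of the `g p`
  obtain ⟨d, hd⟩ := IsLocalization.exist_integer_multiples_of_finset (nonZeroDivisors D)
    (S.biUnion fun p => (g p).support.image (g p).coeff)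
  set d' : K := algebraMap D K (d : D) with hd'def
  have hd'0 : d' ≠ 0 := by
    rw [hd'def]
    exact IsFractionRing.to_map_ne_zero_of_mem_nonZeroDivisors d.2
  have hcoeff : ∀ p ∈ S, ∀ n : ℕ, (Polynomial.C d' * g p).coeff n ∈ (1 : Submodule D K) := by
    intro p hp n
    rw [Polynomial.coeff_C_mul]
    by_cases hn : n ∈ (g p).support
    · have hmem : (g p).coeff n ∈ S.biUnion fun p => (g p).support.image (g p).coeff :=
        Finset.mem_biUnion.mpr ⟨p, hp, Finset.mem_image.mpr ⟨n, hn, rfl⟩⟩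
      obtain ⟨r, hr⟩ := hd _ hmem
      refine mem_one_iff.mpr ⟨r, ?_⟩
      rw [hr, hd'def, Algebra.smul_def]
    · rw [Polynomial.notMem_support_iff.mp hn, mul_zero]
      exact Submodule.zero_mem _
  -- step 3: the element u := d'/denom lies in (1 : J-bar)
  set u : RatFunc K := algebraMap K (RatFunc K) d' *
    (algebraMap (Polynomial K) (RatFunc K) z.denom)⁻¹ with hudef
  have hbne : algebraMap (Polynomial K) (RatFunc K) z.denom ≠ 0 :=
    RatFunc.algebraMap_ne_zero (RatFunc.denom_ne_zero z)
  have humem : ∀ p ∈ S, u * algebraMap (Polynomial D) (RatFunc K) p ∈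
      (1 : Submodule (Polynomial D) (RatFunc K)) := by
    intro p hp
    have heqp : u * algebraMap (Polynomial D) (RatFunc K) p
        = algebraMap (Polynomial K) (RatFunc K) (Polynomial.C d' * g p) := by
      rw [hudef, algebraMap_polyRing_apply, hg p hp, map_mul, map_mul, algebraMap_K_eq]
      field_simp
    rw [heqp]
    obtain ⟨q, hq⟩ := exists_map_of_coeffs_mem_one (hcoeff p hp)
    rw [hq]
    exact mem_one_iff.mpr ⟨q, rfl⟩
  have humem2 : u ∈ (1 : Submodule (Polynomial D) (RatFunc K)) := by
    refine hC ?_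
    rw [Submodule.mem_div_iff_forall_mul_mem]
    exact span_transfer hS humem
  -- step 4: conclude that denom z = 1
  obtain ⟨q, hq⟩ := mem_one_iff.mp humem2
  rw [algebraMap_polyRing_apply] at hq
  have hq2 : Polynomial.C d' = q.map (algebraMap D K) * z.denom := by
    apply KX_injective
    rw [map_mul, hq, hudef, ← algebraMap_K_eq]
    field_simp
  have hqne : q.map (algebraMap D K) ≠ 0 := by
    intro h
    rw [h, zero_mul] at hq2
    exact hd'0 (by simpa using congrArg (fun r => Polynomial.coeff r 0) hq2)
  have hdeg : z.denom.natDegree = 0 := by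
    have := congrArg Polynomial.natDegree hq2
    rw [Polynomial.natDegree_mul hqne (RatFunc.denom_ne_zero z), Polynomial.natDegree_C] at this
    omega
  have hdenom1 : z.denom = 1 := (RatFunc.monic_denom z).natDegree_eq_zero.mp hdeg
  refine ⟨z.num, ?_⟩
  conv_lhs => rw [← RatFunc.num_div_denom z]
  rw [hdenom1, map_one, div_one]

end ZPoly

section ColonPow

variable {D K : Type*} [CommRing D] [IsDomain D] [Field K] [Algebra D K] [IsFractionRing D K]

/-- The finite set of all coefficients of all polynomials in `S` (plus `0`). -/
noncomputable def allCoeffs (S : Finset (Polynomial D)) : Finset D :=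
  S.biUnion fun p => insert 0 (p.support.image p.coeff)

theorem coeff_mem_allCoeffs {S : Finset (Polynomial D)} {p : Polynomial D} (hp : p ∈ S) (n : ℕ) :
    p.coeff n ∈ Ideal.span (allCoeffs S : Set D) := by
  classical
  by_cases hn : n ∈ p.support
  · exact Ideal.subset_span (Finset.mem_biUnion.mpr
      ⟨p, hp, Finset.mem_insert_of_mem (Finset.mem_image.mpr ⟨n, hn, rfl⟩)⟩)
  · rw [Polynomial.notMem_support_iff.mp hn]
    exact Submodule.zero_mem _

theorem allCoeffs_le_sup (S : Finset (Polynomial D)) :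
    Ideal.span (allCoeffs S : Set D) ≤ S.sup (fun p => coeffIdealGe p 0) := by
  classical
  rw [Ideal.span_le]
  intro x hx
  obtain ⟨p, hp, hins⟩ := Finset.mem_biUnion.mp hx
  rcases Finset.mem_insert.mp hins with rfl | himg
  · exact Submodule.zero_mem _
  · obtain ⟨n, _, rfl⟩ := Finset.mem_image.mp himg
    exact (Finset.le_sup (f := fun p => coeffIdealGe p 0) hp)
      (Ideal.subset_span ⟨n, Nat.zero_le n, rfl⟩)

theorem colon_base {J : Ideal (Polynomial D)} {S : Finset (Polynomial D)}
    (hS : Ideal.span (S : Set (Polynomial D)) = J)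
    (hC : (1 : Submodule (Polynomial D) (RatFunc K)) / idealSub (Polynomial D) (RatFunc K) J ≤ 1)
    {x : K} (hx : ∀ p ∈ S, ∀ n : ℕ, (p.coeff n) • x ∈ (1 : Submodule D K)) :
    x ∈ (1 : Submodule D K) := by
  have hpoly : ∀ p ∈ S, algebraMap K (RatFunc K) x * algebraMap (Polynomial D) (RatFunc K) p ∈
      (1 : Submodule (Polynomial D) (RatFunc K)) := by
    intro p hp
    rw [algebraMap_K_eq, algebraMap_polyRing_apply, ← map_mul]
    have hcoeffs : ∀ n, (Polynomial.C x * p.map (algebraMap D K)).coeff n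
        ∈ (1 : Submodule D K) := by
      intro n
      rw [Polynomial.coeff_C_mul, Polynomial.coeff_map, mul_comm, ← Algebra.smul_def]
      exact hx p hp n
    obtain ⟨q, hq⟩ := exists_map_of_coeffs_mem_one hcoeffs
    rw [hq]
    exact mem_one_iff.mpr ⟨q, rfl⟩
  have hmem : algebraMap K (RatFunc K) x ∈ (1 : Submodule (Polynomial D) (RatFunc K)) := by
    refine hC ?_
    rw [Submodule.mem_div_iff_forall_mul_mem]
    exact span_transfer hS hpoly
  exact mem_one_K_iff.mp hmem

theorem colon_pow {J : Ideal (Polynomial D)} {S : Finset (Polynomial D)}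
    (hS : Ideal.span (S : Set (Polynomial D)) = J)
    (hC : (1 : Submodule (Polynomial D) (RatFunc K)) / idealSub (Polynomial D) (RatFunc K) J ≤ 1)
    (M : ℕ) :
    ∀ x : K, (∀ a ∈ Ideal.span (allCoeffs S : Set D) ^ M, a • x ∈ (1 : Submodule D K)) →
      x ∈ (1 : Submodule D K) := by
  induction M with
  | zero =>
    intro x hx
    have := hx 1 (by rw [pow_zero, Ideal.one_eq_top]; trivial)
    rwa [one_smul] at this
  | succ M ih =>
    intro x hx
    refine colon_base hS hC fun p hp n => ?_
    refine ih _ fun a ha => ?_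
    rw [smul_smul]
    refine hx _ ?_
    rw [pow_succ]
    exact Ideal.mul_mem_mul ha (coeff_mem_allCoeffs hp n)

theorem exists_nonzero_coeff {J : Ideal (Polynomial D)} {S : Finset (Polynomial D)}
    (hS : Ideal.span (S : Set (Polynomial D)) = J) (hJbot : J ≠ ⊥) :
    ∃ c : D, c ≠ 0 ∧ c ∈ Ideal.span (allCoeffs S : Set D) := by
  have hex : ∃ p ∈ S, p ≠ 0 := by
    by_contra h
    push_neg at h
    apply hJbot
    refine le_bot_iff.mp ?_
    rw [← hS, Ideal.span_le]
    intro q hq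
    rw [h q hq]
    exact Submodule.zero_mem ⊥
  obtain ⟨p, hp, hp0⟩ := hex
  exact ⟨p.leadingCoeff, Polynomial.leadingCoeff_ne_zero.mpr hp0,
    coeff_mem_allCoeffs hp p.natDegree⟩

theorem C_to_QW {J : Ideal (Polynomial D)} (hJbot : J ≠ ⊥) (hFG : J.FG)
    (hC : (1 : Submodule (Polynomial D) (RatFunc K)) / idealSub (Polynomial D) (RatFunc K) J ≤ 1) :
    QProp (tildeFun D K (vFun D K)) (idealSub (Polynomial D) (RatFunc K) J) := by
  classical
  obtain ⟨S, hS⟩ := hFG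
  intro z hz hcond
  obtain ⟨Z, rfl⟩ := z_is_poly hS hC hz hcond
  set z := algebraMap (Polynomial K) (RatFunc K) Z with hzdef
  set W := contentOf D K
    (z • ((idealSub (Polynomial D) (RatFunc K) J : Submodule _ _) : Set (RatFunc K))) with hWdef
  have hWsupply : ∀ q ∈ J, ∀ t, (Z * q.map (algebraMap D K)).coeff t ∈ W := by
    intro q hq t
    refine coeff_mem_contentOf ?_ t
    have hmem : algebraMap (Polynomial D) (RatFunc K) q
        ∈ (idealSub (Polynomial D) (RatFunc K) J : Submodule _ _) :=
      mem_idealSub.mpr ⟨q, hq, rfl⟩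
    have heq : algebraMap (Polynomial K) (RatFunc K) (Z * q.map (algebraMap D K))
        = z • algebraMap (Polynomial D) (RatFunc K) q := by
      rw [smul_eq_mul, map_mul, hzdef, algebraMap_polyRing_apply]
    rw [heq]
    exact Set.smul_mem_smul_set hmem
  have hstair : ∀ p ∈ S, ∃ N, coeffIdealGe p 0 ^ N ≤ smulColon W Z := by
    intro p hp
    exact staircase (hWsupply p (hS ▸ Ideal.subset_span hp))
  obtain ⟨M, hM⟩ := finset_sup_pow_le S _ _ hstair
  set AI := Ideal.span (allCoeffs S : Set D) with hAIdef
  have hIle : AI ^ M ≤ smulColon W Z :=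
    le_trans (Ideal.pow_right_mono (allCoeffs_le_sup S) M) hM
  -- the ideal AI^M satisfies the conditions of tildeFun
  obtain ⟨c, hc0, hcAI⟩ := exists_nonzero_coeff hS hJbot
  have hIbot : AI ^ M ≠ ⊥ := by
    intro h
    have : c ^ M ∈ AI ^ M := Ideal.pow_mem_pow hcAI M
    rw [h] at this
    exact pow_ne_zero M hc0 ((Submodule.mem_bot D).mp this)
  have hIfg : (AI ^ M).FG := Submodule.FG.pow ⟨allCoeffs S, rfl⟩ M
  have hIcond : vFun D K (idealSub D K (AI ^ M)) = vFun D K 1 := by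
    rw [vFun_eq_vFun_one_iff (idealSub_le_one _)]
    intro x hx
    exact colon_pow hS hC M x (mem_one_div_idealSub_iff.mp hx)
  refine algebraMap_mem_polyExt_iff.mpr fun n => ?_
  refine le_tildeFun_of (AI ^ M) hIbot hIfg hIcond ?_
  exact fun a ha => mem_smulColon.mp (hIle ha) n

end ColonPow

/- The theorem. -/

theorem tilde_bigTri_v_eq_w (D K : Type*) [CommRing D] [IsDomain D] [Field K] [Algebra D K] [IsFractionRing D K] :
    ∀ A : Submodule (Polynomial D) (RatFunc K), A ≠ ⊥ →
      tildeFun (Polynomial D) (RatFunc K) (bigTri D K (vFun D K)) A =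
        tildeFun (Polynomial D) (RatFunc K) (bigTri D K (tildeFun D K (vFun D K))) A ∧
      tildeFun (Polynomial D) (RatFunc K) (bigTri D K (vFun D K)) A =
        tildeFun (Polynomial D) (RatFunc K) (vFun (Polynomial D) (RatFunc K)) A := by
  intro A _
  have hv1 : ∀ E : Submodule D K, E ≤ 1 → vFun D K E ≤ 1 := fun E h => vFun_le_one h
  have hvext : ∀ E : Submodule D K, E ≤ vFun D K E := le_vFun
  have hw1 : ∀ E : Submodule D K, E ≤ 1 → tildeFun D K (vFun D K) E ≤ 1 :=
    fun E h => tildeFun_vFun_le_one h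
  have hwext : ∀ E : Submodule D K, E ≤ tildeFun D K (vFun D K) E := le_tildeFun _
  have key : ∀ J : Ideal (Polynomial D), J ≠ ⊥ → J.FG →
      ((bigTri D K (vFun D K) (idealSub (Polynomial D) (RatFunc K) J)
          = bigTri D K (vFun D K) 1) ↔
        ((1 : Submodule (Polynomial D) (RatFunc K))
          / idealSub (Polynomial D) (RatFunc K) J ≤ 1)) := by
    intro J hbot hfg
    rw [bigTri_eq_one_iff hv1 hvext (idealSub_le_one J)]
    constructor
    · exact QProp_to_C hv1
    · intro hC z hz hcond
      exact polyExt_mono (tildeFun_vFun_le_vFun _) (C_to_QW hbot hfg hC z hz hcond)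
  have keyw : ∀ J : Ideal (Polynomial D), J ≠ ⊥ → J.FG →
      ((bigTri D K (tildeFun D K (vFun D K)) (idealSub (Polynomial D) (RatFunc K) J)
          = bigTri D K (tildeFun D K (vFun D K)) 1) ↔
        ((1 : Submodule (Polynomial D) (RatFunc K))
          / idealSub (Polynomial D) (RatFunc K) J ≤ 1)) := by
    intro J hbot hfg
    rw [bigTri_eq_one_iff hw1 hwext (idealSub_le_one J)]
    exact ⟨QProp_to_C hw1, C_to_QW hbot hfg⟩
  constructor
  · exact tildeFun_congr (fun J h1 h2 => (key J h1 h2).trans ((keyw J h1 h2).symm)) A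
  · refine tildeFun_congr (fun J h1 h2 => (key J h1 h2).trans ?_) A
    exact (vFun_eq_vFun_one_iff (idealSub_le_one J)).symm
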